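/- Reduction of the denoising mean-matching error to noise-prediction error: let E be a real inner product space, let x₀, ε, ε̂ ∈ E, let 0 < α < 1 and 0 < ā' < 1, set ā = α·ā', β = 1 − α, and x_t = √(ā)·x₀ + √(1−ā)·ε. Define μ̃ = ( √(ā')·β·x₀ + √α·(1−ā')·x_t ) / (1 − ā) and μ̂ = (1/√α)·( x_t − (β/√(1−ā))·ε̂ ). Then ‖μ̃ − μ̂‖² = ( β² / ( α·(1−ā) ) ) · ‖ε − ε̂‖². -/

import Mathlib

/-- Reduction of the denoising mean-matching error to the noise-prediction error:
with `ā = α·ā'`, `β = 1 − α`, `x_t = √ā·x₀ + √(1−ā)·ε`, true posterior mean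
`μ̃ = (√ā'·β·x₀ + √α·(1−ā')·x_t)/(1−ā)` and model mean
`μ̂ = (1/√α)·(x_t − (β/√(1−ā))·ε̂)`, we have
`‖μ̃ − μ̂‖² = (β²/(α(1−ā)))·‖ε − ε̂‖²`. -/
theorem ddpm_mean_matching_to_noise_prediction
    {E : Type*} [NormedAddCommGroup E] [InnerProductSpace ℝ E]
    (x₀ ε εhat : E) (α abar' abar β : ℝ) (xt μtilde μhat : E)
    (hα₀ : 0 < α) (hα₁ : α < 1) (h₀ : 0 < abar') (h₁ : abar' < 1)
    (habar : abar = α * abar') (hβ : β = 1 - α)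
    (hxt : xt = Real.sqrt abar • x₀ + Real.sqrt (1 - abar) • ε)
    (hμtilde : μtilde =
      (1 - abar)⁻¹ • ((Real.sqrt abar' * β) • x₀ + (Real.sqrt α * (1 - abar')) • xt))
    (hμhat : μhat = (Real.sqrt α)⁻¹ • (xt - (β / Real.sqrt (1 - abar)) • εhat)) :
    ‖μtilde - μhat‖ ^ 2 = (β ^ 2 / (α * (1 - abar))) * ‖ε - εhat‖ ^ 2 := by
  subst habar hβ
  have h1a : 0 < 1 - α * abar' := by nlinarith
  have hsa : Real.sqrt α > 0 := Real.sqrt_pos.mpr hα₀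
  have hs1 : Real.sqrt (1 - α * abar') > 0 := Real.sqrt_pos.mpr h1a
  have hsa' : Real.sqrt abar' > 0 := Real.sqrt_pos.mpr h₀
  have hsaq : Real.sqrt α * Real.sqrt α = α := Real.mul_self_sqrt hα₀.le
  have hs1q : Real.sqrt (1 - α * abar') * Real.sqrt (1 - α * abar') = 1 - α * abar' :=
    Real.mul_self_sqrt h1a.le
  have hsplit : Real.sqrt (α * abar') = Real.sqrt α * Real.sqrt abar' :=
    Real.sqrt_mul hα₀.le _
  have key : μtilde - μhat =
      ((1 - α) / (Real.sqrt α * Real.sqrt (1 - α * abar'))) • (εhat - ε) := by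
    rw [hμtilde, hμhat, hxt, hsplit]
    match_scalars
    · field_simp
      linear_combination (Real.sqrt abar' * (1 - abar')) * hsaq
    · field_simp
      linear_combination (Real.sqrt α * Real.sqrt α * (1 - abar') - (1 - α * abar')) *
          hs1q + ((1 - abar') * (1 - α * abar')) * hsaq
    · field_simp
  rw [key, norm_smul, mul_pow, ← norm_neg (εhat - ε), neg_sub, Real.norm_eq_abs, sq_abs,
    div_pow, mul_pow, Real.sq_sqrt hα₀.le, Real.sq_sqrt h1a.le]
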